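/- Let $1 < p < q \le 5 < r$ and $\gamma > 0$. Suppose $a^* > 0$ satisfies the FD-case nonexistence relation $\gamma = \frac{q+1}{q-1}\left(\frac{p-1}{p+1}(a^*)^{\frac{p-q}{2}} - \frac{r-1}{r+1}(a^*)^{\frac{r-q}{2}}\right)$. Then for all $s \in (0,1)$, $\frac{5-p}{p+1}(1 - s^{\frac{p-1}{2}})(a^*)^{\frac{p-1}{2}} - \gamma\,\frac{5-q}{q+1}(1 - s^{\frac{q-1}{2}})(a^*)^{\frac{q-1}{2}} > 0$. -/

import Mathlib

open Set

/-- For `0 < b ≤ a` and `s ∈ (0,1)`: `b * (1 - s^a) ≤ a * (1 - s^b)`. -/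
lemma aux_rpow_ratio {s a b : ℝ} (hs0 : 0 < s) (hs1 : s < 1) (hb : 0 < b) (hba : b ≤ a) :
    b * (1 - s ^ a) ≤ a * (1 - s ^ b) := by
  set t : ℝ := s ^ b with ht
  have ht0 : 0 < t := Real.rpow_pos_of_pos hs0 b
  have ht1 : t ≤ 1 := (Real.rpow_le_one hs0.le hs1.le hb.le)
  have hc : 1 ≤ a / b := (one_le_div hb).mpr hba
  have hbern : 1 + (a / b) * (t - 1) ≤ (1 + (t - 1)) ^ (a / b) :=
    one_add_mul_self_le_rpow_one_add (by linarith) hc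
  have hrw : (1 + (t - 1)) ^ (a / b) = s ^ a := by
    have h1 : (1 + (t - 1)) = s ^ b := by rw [ht]; ring
    rw [h1, ← Real.rpow_mul hs0.le]
    congr 1
    field_simp
  have := hbern
  rw [hrw] at this
  have hb' : b ≠ 0 := ne_of_gt hb
  have h2 : b * (1 + (a / b) * (t - 1)) ≤ b * (s ^ a) := by
    exact mul_le_mul_of_nonneg_left this hb.le
  have h3 : b * (1 + (a / b) * (t - 1)) = b + a * (t - 1) := by
    field_simp
  nlinarith [h2, h3]

set_option maxHeartbeats 1000000 in
theorem FD_stability_key_inequality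
    (p q r γ astar : ℝ) (hp : 1 < p) (hpq : p < q) (hq5 : q ≤ 5) (hr : 5 < r)
    (hγ : 0 < γ) (ha : 0 < astar)
    (hrel : γ = (q + 1) / (q - 1) *
        ((p - 1) / (p + 1) * astar ^ ((p - q)/2) - (r - 1) / (r + 1) * astar ^ ((r - q)/2))) :
    ∀ s ∈ Ioo (0:ℝ) 1,
      0 < (5 - p) / (p + 1) * (1 - s ^ ((p - 1)/2)) * astar ^ ((p - 1)/2)
          - γ * ((5 - q) / (q + 1)) * (1 - s ^ ((q - 1)/2)) * astar ^ ((q - 1)/2) := by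
  intro s hs
  obtain ⟨hs0, hs1⟩ := hs
  set A := astar ^ ((p - 1)/2) with hAdef
  set B := astar ^ ((q - 1)/2) with hBdef
  set E := astar ^ ((p - q)/2) with hEdef
  set F := astar ^ ((r - q)/2) with hFdef
  set X := 1 - s ^ ((p - 1)/2) with hXdef
  set Y := 1 - s ^ ((q - 1)/2) with hYdef
  have hA : 0 < A := Real.rpow_pos_of_pos ha _
  have hB : 0 < B := Real.rpow_pos_of_pos ha _
  have hE : 0 < E := Real.rpow_pos_of_pos ha _
  have hF : 0 < F := Real.rpow_pos_of_pos ha _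
  have hEB : E * B = A := by
    rw [hEdef, hBdef, hAdef, ← Real.rpow_add ha]
    ring_nf
  have hX : 0 < X := by
    have : s ^ ((p - 1)/2) < 1 :=
      Real.rpow_lt_one hs0.le hs1 (by linarith)
    simpa [hXdef] using sub_pos.mpr this
  have hY : 0 < Y := by
    have : s ^ ((q - 1)/2) < 1 :=
      Real.rpow_lt_one hs0.le hs1 (by linarith)
    simpa [hYdef] using sub_pos.mpr this
  clear_value A B E F X Y
  -- key ratio bound: (p-1) * Y ≤ (q-1) * X
  have key : (p - 1)/2 * Y ≤ (q - 1)/2 * X := by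
    rw [hXdef, hYdef]
    exact aux_rpow_ratio hs0 hs1 (by linarith) (by linarith)
  have key' : (p - 1) * Y ≤ (q - 1) * X := by nlinarith [key]
  -- relation bound: γ * (q-1) * (p+1) < (p-1) * (q+1) * E
  have hq1 : (0:ℝ) < q - 1 := by linarith
  have hq1' : (0:ℝ) < q + 1 := by linarith
  have hp1 : (0:ℝ) < p + 1 := by linarith
  have hr1 : (0:ℝ) < r + 1 := by linarith
  have hCD : γ * (q - 1) / (q + 1) = (p - 1) / (p + 1) * E - (r - 1) / (r + 1) * F := by
    rw [hrel]; field_simp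
  have hD : 0 < (r - 1) / (r + 1) * F := mul_pos (div_pos (by linarith) hr1) hF
  have hCD' : γ * (q - 1) * (p + 1) < (p - 1) * (q + 1) * E := by
    have h1 : γ * (q - 1) / (q + 1) < (p - 1) / (p + 1) * E := by
      rw [hCD]; linarith
    have h2 := (div_lt_iff₀ hq1').mp h1
    have h3 : (p - 1) / (p + 1) * E * (q + 1) * (p + 1) = (p - 1) * (q + 1) * E := by
      field_simp
    nlinarith [mul_pos hq1' hp1]
  have h5q : (0:ℝ) ≤ 5 - q := by linarith
  have hp1' : (0:ℝ) < p - 1 := by linarith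
  rw [← hEB]
  have hc1 : (0:ℝ) ≤ γ * (5 - q) * (p + 1) * B :=
    mul_nonneg (mul_nonneg (mul_nonneg hγ.le h5q) hp1.le) hB.le
  have h1 : γ * (5 - q) * (p + 1) * B * ((p - 1) * Y)
      ≤ γ * (5 - q) * (p + 1) * B * ((q - 1) * X) :=
    mul_le_mul_of_nonneg_left key' hc1
  have hc2 : (0:ℝ) ≤ (5 - q) * (X * B) := mul_nonneg h5q (mul_pos hX hB).le
  have h2 : (5 - q) * (X * B) * (γ * (q - 1) * (p + 1))
      ≤ (5 - q) * (X * B) * ((p - 1) * (q + 1) * E) :=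
    mul_le_mul_of_nonneg_left hCD'.le hc2
  have hqp : (0:ℝ) < q - p := by linarith
  have h3 : (0:ℝ) < (q - p) * (p - 1) * (q + 1) * X * E * B :=
    mul_pos (mul_pos (mul_pos (mul_pos (mul_pos hqp hp1') hq1') hX) hE) hB
  have hM : (0:ℝ) < (p + 1) * (q + 1) * (p - 1) := mul_pos (mul_pos hp1 hq1') hp1'
  have hMT : 0 < (p + 1) * (q + 1) * (p - 1) *
      ((5 - p) / (p + 1) * X * (E * B) - γ * ((5 - q) / (q + 1)) * Y * B) := by
    have hexp : (p + 1) * (q + 1) * (p - 1) *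
        ((5 - p) / (p + 1) * X * (E * B) - γ * ((5 - q) / (q + 1)) * Y * B)
        = (5 - p) * (q + 1) * (p - 1) * X * E * B
          - γ * (5 - q) * (p + 1) * (p - 1) * Y * B := by
      field_simp
    rw [hexp]
    nlinarith [h1, h2, h3, hX.le, hB.le, hE.le]
  by_contra hcon
  push_neg at hcon
  nlinarith [hMT, mul_nonneg hM.le (neg_nonneg.mpr hcon)]
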